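/- Let P be a sub-uniform random variable, i.e., P takes values in [0,1] and E[h(P)] ≤ E[h(U)] for every convex h, where U is uniform on [0,1]. Then for every α ∈ [0, 1/2], P(P ≤ α) ≤ 2α. -/

import Mathlib

open MeasureTheory Set

lemma subuniform_key
    {Ω : Type*} [MeasurableSpace Ω] (μ : Measure Ω) [IsProbabilityMeasure μ]
    (P : Ω → ℝ) (hPmeas : Measurable P) (hPmem : ∀ ω, P ω ∈ Icc (0 : ℝ) 1)
    (hcx : ∀ h : ℝ → ℝ, ConvexOn ℝ Set.univ h →
      Integrable (fun ω : Ω => h (P ω)) μ → IntegrableOn h (Icc (0 : ℝ) 1) volume →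
      ∫ ω, h (P ω) ∂μ ≤ ∫ u in Icc (0 : ℝ) 1, h u)
    (α : ℝ) (hα0 : 0 < α) (hα1 : α ≤ 1 / 2) :
    μ {ω | P ω ≤ α} ≤ ENNReal.ofReal (2 * α) := by
  set h : ℝ → ℝ := fun x => max (2 * α - x) 0 with hhdef
  have hcont : Continuous h := (continuous_const.sub continuous_id).max continuous_const
  have hconv : ConvexOn ℝ univ h := by
    have h1 : ConvexOn ℝ univ (fun x : ℝ => 2 * α - x) := by
      have := (convexOn_const (2 * α) (convex_univ : Convex ℝ (univ : Set ℝ))).add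
        ((concaveOn_id (convex_univ : Convex ℝ (univ : Set ℝ))).neg)
      convert this using 1
      all_goals (ext x; simp [sub_eq_add_neg])
    exact h1.sup (convexOn_const 0 convex_univ)
  have h2α : 2 * α ≤ 1 := by linarith
  have hint1 : Integrable (fun ω => h (P ω)) μ := by
    refine (integrable_const (2 * α)).mono'
      ((hcont.measurable.comp hPmeas).aestronglyMeasurable) ?_
    filter_upwards with ω
    have h0 := (hPmem ω).1
    rw [Real.norm_eq_abs, abs_of_nonneg (le_max_right _ _)]
    exact max_le (by linarith) (by linarith)
  have hint2 : IntegrableOn h (Icc (0 : ℝ) 1) volume := hcont.integrableOn_Icc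
  have hmain := hcx h hconv hint1 hint2
  have hrhs : ∫ u in Icc (0 : ℝ) 1, h u = 2 * α ^ 2 := by
    rw [integral_Icc_eq_integral_Ioc, ← intervalIntegral.integral_of_le zero_le_one,
      ← intervalIntegral.integral_add_adjacent_intervals
        (hcont.intervalIntegrable 0 (2 * α)) (hcont.intervalIntegrable (2 * α) 1)]
    have e1 : ∫ u in (0 : ℝ)..(2 * α), h u = ∫ u in (0 : ℝ)..(2 * α), (2 * α - u) := by
      refine intervalIntegral.integral_congr fun u hu => ?_
      rw [uIcc_of_le (by linarith)] at hu
      exact max_eq_left (by linarith [hu.2])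
    have e2 : ∫ u in (2 * α)..1, h u = 0 := by
      rw [show (0 : ℝ) = ∫ u in (2 * α)..1, (0 : ℝ) by simp]
      refine intervalIntegral.integral_congr fun u hu => ?_
      rw [uIcc_of_le h2α] at hu
      exact max_eq_right (by linarith [hu.1])
    rw [e1, e2, intervalIntegral.integral_sub intervalIntegrable_const
      intervalIntegral.intervalIntegrable_id]
    simp
    ring
  have hs : MeasurableSet {ω | P ω ≤ α} := hPmeas measurableSet_Iic
  have hlhs : α * (μ {ω | P ω ≤ α}).toReal ≤ ∫ ω, h (P ω) ∂μ := by
    have hind : ∫ ω, ({ω | P ω ≤ α}).indicator (fun _ => α) ω ∂μ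
        = (μ {ω | P ω ≤ α}).toReal * α := by
      rw [integral_indicator_const _ hs]; simp [mul_comm, measureReal_def]
    calc α * (μ {ω | P ω ≤ α}).toReal
        = ∫ ω, ({ω | P ω ≤ α}).indicator (fun _ => α) ω ∂μ := by rw [hind]; ring
      _ ≤ ∫ ω, h (P ω) ∂μ := by
          refine integral_mono ((integrable_const α).indicator hs) hint1 fun ω => ?_
          by_cases hω : P ω ≤ α
          · simp only [indicator_apply, mem_setOf_eq, if_pos hω]
            exact le_max_of_le_left (by linarith)
          · simp only [indicator_apply, mem_setOf_eq, if_neg hω]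
            exact le_max_right _ _
  have htor : (μ {ω | P ω ≤ α}).toReal ≤ 2 * α := by
    have := hlhs.trans (hmain.trans_eq hrhs)
    nlinarith [this]
  calc μ {ω | P ω ≤ α} = ENNReal.ofReal ((μ {ω | P ω ≤ α}).toReal) :=
        (ENNReal.ofReal_toReal (measure_ne_top μ _)).symm
    _ ≤ ENNReal.ofReal (2 * α) := ENNReal.ofReal_le_ofReal htor

/-- If `P` is sub-uniform (takes values in `[0,1]` and is dominated
in the convex order by a uniform variable on `[0,1]`), then
`P(P ≤ α) ≤ 2α` for every `α ∈ [0, 1/2]`. -/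
theorem subuniform_two_alpha_bound
    {Ω : Type*} [MeasurableSpace Ω] (μ : Measure Ω) [IsProbabilityMeasure μ]
    (P : Ω → ℝ) (hPmeas : Measurable P) (hPmem : ∀ ω, P ω ∈ Icc (0 : ℝ) 1)
    (hcx : ∀ h : ℝ → ℝ, ConvexOn ℝ Set.univ h →
      Integrable (fun ω : Ω => h (P ω)) μ → IntegrableOn h (Icc (0 : ℝ) 1) volume →
      ∫ ω, h (P ω) ∂μ ≤ ∫ u in Icc (0 : ℝ) 1, h u)
    (α : ℝ) (hα : α ∈ Icc (0 : ℝ) (1 / 2)) :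
    μ {ω | P ω ≤ α} ≤ ENNReal.ofReal (2 * α) := by
  rcases eq_or_lt_of_le hα.1 with h0 | h0
  · -- α = 0
    have hz : μ {ω | P ω ≤ α} = 0 := by
      refine le_antisymm ?_ zero_le
      refine ENNReal.le_of_forall_pos_le_add fun ε hε _ => ?_
      rw [zero_add]
      set β : ℝ := min ((ε : ℝ) / 2) (1 / 2) with hβ
      have hεpos : (0 : ℝ) < ε := by exact_mod_cast hε
      have hβpos : 0 < β := lt_min (by linarith) (by norm_num)
      have hk := subuniform_key μ P hPmeas hPmem hcx β hβpos (min_le_right _ _)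
      have hmono : μ {ω | P ω ≤ α} ≤ μ {ω | P ω ≤ β} :=
        measure_mono fun ω hω => by
        simp only [mem_setOf_eq] at hω ⊢; linarith
      refine hmono.trans (hk.trans ?_)
      have : (2 : ℝ) * β ≤ ε := by
        have := min_le_left ((ε : ℝ) / 2) (1 / 2); linarith
      calc ENNReal.ofReal (2 * β) ≤ ENNReal.ofReal (ε : ℝ) := ENNReal.ofReal_le_ofReal this
        _ = (ε : ENNReal) := ENNReal.ofReal_coe_nnreal
    rw [hz]; exact zero_le
  · exact subuniform_key μ P hPmeas hPmem hcx α h0 hα.2
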